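/- Let 𝒜 be an abelian category with enough projectives and let A be an object with Ext¹_𝒜(A, Q) = 0 for every projective object Q. Let 0 → K →^i P →^p A → 0 and 0 → K' →^{i'} P' →^{p'} A' → 0 be short exact sequences with P and P' projective, and suppose morphisms f : K → K', h : P → P', g : A → A' satisfy h ∘ i = i' ∘ f and g ∘ p = p' ∘ h. If f factors through a projective object of 𝒜, then g factors through a projective object of 𝒜. -/

import Mathlib

open CategoryTheory Category Limits

universe w v u

variable {𝒜 : Type u} [Category.{v} 𝒜] [Abelian 𝒜]

/-- A morphism factors through a projective object. -/
def FactorsThroughProjective {X Y : 𝒜} (f : X ⟶ Y) : Prop :=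
  ∃ (Q : 𝒜) (_ : Projective Q) (u : X ⟶ Q) (v : Q ⟶ Y), f = u ≫ v

section Aux

open Abelian DerivedCategory Pretriangulated

/-- The single functor composed with the homology functor is isomorphic to the identity. -/
noncomputable def auxSingleCompHomologyIso (C : Type u) [Category.{v} C] [Abelian C]
    [HasDerivedCategory C] :
    DerivedCategory.singleFunctor C 0 ⋙ DerivedCategory.homologyFunctor C 0 ≅ 𝟭 C :=
  Functor.isoWhiskerRight ((SingleFunctors.evaluation _ _ 0).mapIso
      (DerivedCategory.singleFunctorsPostcompQIso C)) (DerivedCategory.homologyFunctor C 0)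
    ≪≫ Functor.associator _ _ _
    ≪≫ Functor.isoWhiskerLeft (HomologicalComplex.single C (ComplexShape.up ℤ) 0)
        (DerivedCategory.homologyFunctorFactors C 0)
    ≪≫ HomologicalComplex.homologyFunctorSingleIso C _ 0

/-- If a short exact sequence has vanishing extension class, then its monomorphism
admits a retraction. -/
lemma aux_retraction_of_extClass_eq_zero [HasExt.{w} 𝒜]
    {S : ShortComplex 𝒜} (hS : S.ShortExact)
    (h0 : hS.extClass = 0) :
    ∃ (r : S.X₂ ⟶ S.X₁), S.f ≫ r = 𝟙 S.X₁ := by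
  letI := HasDerivedCategory.standard 𝒜
  have hδ : hS.singleδ = 0 := by
    rw [← hS.extClass_hom, h0, Abelian.Ext.zero_hom]
  have hdist := Pretriangulated.inv_rot_of_distTriang _ hS.singleTriangle_distinguished
  have hmor₁ : (hS.singleTriangle.invRotate).mor₁ = 0 := by
    dsimp [Triangle.invRotate, ShortComplex.ShortExact.singleTriangle]
    rw [hδ]
    erw [Functor.map_zero, zero_comp, neg_zero]
    rfl
  obtain ⟨r, hr⟩ : ∃ r : (DerivedCategory.singleFunctor 𝒜 0).obj S.X₂ ⟶
      (DerivedCategory.singleFunctor 𝒜 0).obj S.X₁,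
      𝟙 _ = (DerivedCategory.singleFunctor 𝒜 0).map S.f ≫ r := Triangle.yoneda_exact₂ _ hdist
    (𝟙 ((DerivedCategory.singleFunctor 𝒜 0).obj S.X₁)) (by rw [hmor₁]; exact zero_comp)
  have hr' : (DerivedCategory.singleFunctor 𝒜 0).map S.f ≫ r = 𝟙 _ := hr.symm
  -- `r : (singleFunctor 𝒜 0).obj S.X₂ ⟶ (singleFunctor 𝒜 0).obj S.X₁`
  -- with `𝟙 = (singleFunctor 𝒜 0).map S.f ≫ r`
  let e := auxSingleCompHomologyIso 𝒜
  let H := DerivedCategory.homologyFunctor 𝒜 0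
  refine ⟨e.inv.app S.X₂ ≫ H.map r ≫ e.hom.app S.X₁, ?_⟩
  have hnat : S.f ≫ e.inv.app S.X₂ =
      e.inv.app S.X₁ ≫ H.map ((DerivedCategory.singleFunctor 𝒜 0).map S.f) := by
    simpa using e.inv.naturality S.f
  rw [← assoc, hnat, assoc, ← assoc (H.map _), ← H.map_comp, hr']
  simp

/-- Lifting along the monomorphism of a short exact sequence when `Ext¹(X₃, Q) = 0`. -/
lemma aux_lift_of_ext_vanishing [HasExt.{w} 𝒜]
    {S : ShortComplex 𝒜} (hS : S.ShortExact) {Q : 𝒜}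
    (hsub : Subsingleton (Abelian.Ext S.X₃ Q 1)) (u : S.X₁ ⟶ Q) :
    ∃ u' : S.X₂ ⟶ Q, S.f ≫ u' = u := by
  haveI := hS.mono_f
  haveI := hS.epi_g
  -- form the pushout short exact sequence `0 → Q → E → S.X₃ → 0`
  let E := pushout S.f u
  let j : Q ⟶ E := pushout.inr S.f u
  let q : E ⟶ S.X₃ := pushout.desc S.g 0 (by rw [S.zero, comp_zero])
  have hjq : j ≫ q = 0 := by simp only [j, q]; exact pushout.inr_desc _ _ _
  let T : ShortComplex 𝒜 := ShortComplex.mk j q hjq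
  have hinlq : pushout.inl S.f u ≫ q = S.g := by simp only [q]; exact pushout.inl_desc _ _ _
  haveI : Epi q := epi_of_epi_fac hinlq
  have hfac : ∀ {W : 𝒜} (k : E ⟶ W) (hk : j ≫ k = 0),
      q ≫ hS.exact.desc (pushout.inl S.f u ≫ k)
        (by rw [← assoc, pushout.condition, assoc, hk, comp_zero]) = k := by
    intro W k hk
    apply pushout.hom_ext
    · rw [← assoc, show pushout.inl S.f u ≫ q = S.g from hinlq, hS.exact.g_desc]
    · rw [← assoc, show pushout.inr S.f u ≫ q = 0 from hjq, zero_comp]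
      exact hk.symm
  have hT : T.ShortExact := by
    refine { exact := ShortComplex.exact_of_g_is_cokernel _ ?_ }
    refine CokernelCofork.IsColimit.ofπ _ _
      (fun {W} k hk => hS.exact.desc (pushout.inl S.f u ≫ k)
        (by rw [← assoc, pushout.condition, assoc, hk, comp_zero])) ?_ ?_
    · intro W k hk
      exact hfac k hk
    · intro W k hk m hm
      rw [← cancel_epi q]
      exact hm.trans (hfac k hk).symm
  have h0 : hT.extClass = 0 := Subsingleton.elim _ _
  obtain ⟨r, hr⟩ := aux_retraction_of_extClass_eq_zero hT h0
  refine ⟨pushout.inl S.f u ≫ r, ?_⟩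
  rw [← assoc, pushout.condition, assoc]
  change u ≫ T.f ≫ r = u
  rw [hr, comp_id]

end Aux

theorem factorsThroughProjective_of_ext_one_vanishing
    [EnoughProjectives 𝒜] [HasExt.{w} 𝒜]
    {A K P A' K' P' : 𝒜}
    (hExt : ∀ Q : 𝒜, Projective Q → Subsingleton (Abelian.Ext A Q 1))
    (hP : Projective P) (hP' : Projective P')
    (i : K ⟶ P) (p : P ⟶ A) (i' : K' ⟶ P') (p' : P' ⟶ A')
    (hi : Mono i) (hp : Epi p) (w : i ≫ p = 0)
    (hex : (ShortComplex.mk i p w).Exact)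
    (hi' : Mono i') (hp' : Epi p') (w' : i' ≫ p' = 0)
    (hex' : (ShortComplex.mk i' p' w').Exact)
    (f : K ⟶ K') (h : P ⟶ P') (g : A ⟶ A')
    (hcomm₁ : i ≫ h = f ≫ i') (hcomm₂ : p ≫ g = h ≫ p')
    (hf : FactorsThroughProjective f) :
    FactorsThroughProjective g := by
  obtain ⟨Q, hQ, u, v, huv⟩ := hf
  have hS : (ShortComplex.mk i p w).ShortExact :=
    { exact := hex, mono_f := hi, epi_g := hp }
  obtain ⟨u', hu'⟩ := aux_lift_of_ext_vanishing hS (hExt Q hQ) u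
  -- `u' : P ⟶ Q` with `i ≫ u' = u`
  let ψ : P ⟶ P' := h - u' ≫ v ≫ i'
  have hu'' : i ≫ u' = u := hu'
  have hiψ : i ≫ ψ = 0 := by
    simp only [ψ, Preadditive.comp_sub]
    rw [hcomm₁, ← assoc, ← assoc, hu'', ← huv]
    exact sub_self _
  haveI : Epi (ShortComplex.mk i p w).g := hp
  let t : A ⟶ P' := hex.desc ψ hiψ
  have ht : p ≫ t = ψ := hex.g_desc ψ hiψ
  refine ⟨P', hP', t, p', ?_⟩
  rw [← cancel_epi p, hcomm₂, ← assoc, ht]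
  simp [ψ, Preadditive.sub_comp, assoc, w']
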